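/- Let β > 0, E_0 ≥ 0, and suppose S : (E_0,∞) → (0,∞) satisfies S(z)/√(2z) → 1 as z → ∞ and Z_β = √(π/(2β))(1 + o(1)) as β → 0. If additionally S(z) ≥ c > 0 for all z and e^{−βz}/S(z) is integrable, then D*(β) = (2/(βZ_β))∫_{E_0}^∞ e^{−βz}/S(z) dz satisfies β D*(β) → 2 as β → 0. -/

import Mathlib

open Real MeasureTheory Filter

theorem FW_diffusivity_high_temperature
    (E₀ c : ℝ) (hE₀ : 0 ≤ E₀) (hc : 0 < c)
    (S : ℝ → ℝ) (hSpos : ∀ z ∈ Set.Ioi E₀, 0 < S z)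
    (hSlow : ∀ z ∈ Set.Ioi E₀, c ≤ S z)
    (hSasymp : Tendsto (fun z => S z / Real.sqrt (2 * z)) atTop (nhds 1))
    (hSint : ∀ β : ℝ, 0 < β →
      IntegrableOn (fun z => Real.exp (-β * z) / S z) (Set.Ioi E₀))
    (Z : ℝ → ℝ)
    (hZ : Tendsto (fun β => Z β / Real.sqrt (π / (2 * β)))
      (nhdsWithin 0 (Set.Ioi (0:ℝ))) (nhds 1)) :
    Tendsto
      (fun β => β * ((2 / (β * Z β)) * ∫ z in Set.Ioi E₀, Real.exp (-β * z) / S z))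
      (nhdsWithin 0 (Set.Ioi (0:ℝ))) (nhds 2) := by
  set l := nhdsWithin (0:ℝ) (Set.Ioi (0:ℝ)) with hl
  have hβpos : ∀ᶠ β in l, (0:ℝ) < β := eventually_mem_nhdsWithin
  set I : ℝ → ℝ := fun β => ∫ z in Set.Ioi E₀, Real.exp (-β * z) / S z with hI
  -- constant M such that S z ≥ (1/2)√(2z) for z ≥ M
  obtain ⟨M₀, hM₀⟩ : ∃ M₀ : ℝ, ∀ z ≥ M₀, (1/2 : ℝ) < S z / Real.sqrt (2*z) :=
    eventually_atTop.mp (hSasymp.eventually (eventually_gt_nhds (by norm_num)))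
  set M : ℝ := max M₀ 1 with hM
  have hMpos : (0:ℝ) < M := lt_of_lt_of_le one_pos (le_max_right _ _)
  have hSM : ∀ z ≥ M, (1/2 : ℝ) * Real.sqrt (2*z) ≤ S z := by
    intro z hz
    have hz1 : (1:ℝ) ≤ z := le_trans (le_max_right _ _) hz
    have hs : (0:ℝ) < Real.sqrt (2*z) := Real.sqrt_pos.2 (by linarith)
    have := hM₀ z (le_trans (le_max_left _ _) hz)
    rw [lt_div_iff₀ hs] at this
    linarith
  set K : ℝ := Real.sqrt 2 + Real.sqrt M / c with hK
  have hKpos : (0:ℝ) < K := by positivity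
  -- the rescaled integrand
  set F : ℝ → ℝ → ℝ := fun β =>
    Set.indicator (Set.Ioi (E₀ * β)) (fun u => Real.exp (-u) / (Real.sqrt β * S (u / β)))
    with hF
  set μ : Measure ℝ := volume.restrict (Set.Ioi (0:ℝ)) with hμ
  have hrr : ∀ β : ℝ, 0 < β → μ.restrict (Set.Ioi (E₀ * β)) = volume.restrict (Set.Ioi (E₀ * β)) := by
    intro β hβ
    rw [hμ, Measure.restrict_restrict measurableSet_Ioi, Set.Ioi_inter_Ioi,
      sup_eq_left.mpr (by positivity : (0:ℝ) ≤ E₀ * β)]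
  -- the inner function equals a scaling of the original integrand
  have hfun : ∀ β : ℝ, 0 < β →
      (fun u => Real.exp (-u) / (Real.sqrt β * S (u / β)))
        = fun u => (Real.sqrt β)⁻¹ * ((fun z => Real.exp (-β * z) / S z) (u * β⁻¹)) := by
    intro β hβ
    funext u
    have h1 : u * β⁻¹ = u / β := (div_eq_mul_inv u β).symm
    have h2 : -β * (u / β) = -u := by field_simp
    simp only [h1, h2]
    rw [div_mul_eq_div_div_swap, inv_mul_eq_div]
  -- measurability
  have hmeas : ∀ᶠ β in l, AEStronglyMeasurable (F β) μ := by
    filter_upwards [hβpos] with β hβ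
    have hint : IntegrableOn (fun u => (fun z => Real.exp (-β * z) / S z) (u * β⁻¹))
        (Set.Ioi (E₀ * β)) := by
      rw [integrableOn_Ioi_comp_mul_right_iff (fun z => Real.exp (-β * z) / S z) (E₀ * β)
        (inv_pos.2 hβ), mul_inv_cancel_right₀ hβ.ne']
      exact hSint β hβ
    have : AEStronglyMeasurable (fun u => Real.exp (-u) / (Real.sqrt β * S (u / β)))
        (volume.restrict (Set.Ioi (E₀ * β))) := by
      rw [hfun β hβ]
      exact hint.aestronglyMeasurable.const_mul _
    rw [hF, aestronglyMeasurable_indicator_iff measurableSet_Ioi, hrr β hβ]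
    exact this
  -- domination
  have h_bound : ∀ᶠ β in l, ∀ᵐ u ∂μ, ‖F β u‖ ≤ K * (Real.exp (-u) * u ^ ((1/2:ℝ) - 1)) := by
    filter_upwards [hβpos] with β hβ
    rw [hμ, ae_restrict_iff' measurableSet_Ioi]
    refine ae_of_all _ fun u hu => ?_
    have hu0 : (0:ℝ) < u := hu
    have hbnd_pos : (0:ℝ) < K * (Real.exp (-u) * u ^ ((1/2:ℝ) - 1)) := by positivity
    by_cases hcase : u ∈ Set.Ioi (E₀ * β)
    · simp only [F, Set.indicator_of_mem hcase]
      have huβ : E₀ < u / β := (lt_div_iff₀ hβ).2 (by simpa [mul_comm] using hcase)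
      have hSpos' : 0 < S (u / β) := hSpos _ huβ
      -- key lower bound: √u / K ≤ √β * S (u/β)
      have hlow : Real.sqrt u / K ≤ Real.sqrt β * S (u / β) := by
        by_cases hM' : M ≤ u / β
        · have h1 : (1/2 : ℝ) * Real.sqrt (2 * (u/β)) ≤ S (u/β) := hSM _ hM'
          have h2 : Real.sqrt (2 * (u/β)) = Real.sqrt (2*u) / Real.sqrt β := by
            rw [show 2 * (u/β) = (2*u)/β by ring, Real.sqrt_div (by positivity) β]
          have h3 : Real.sqrt β * ((1/2 : ℝ) * Real.sqrt (2 * (u/β)))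
              = (1/2 : ℝ) * Real.sqrt (2*u) := by
            rw [h2]
            field_simp
          have h4 : Real.sqrt u / K ≤ (1/2 : ℝ) * Real.sqrt (2*u) := by
            rw [Real.sqrt_mul (by norm_num) u]
            have hK2 : Real.sqrt 2 ≤ K := le_add_of_nonneg_right (by positivity)
            have h5 : Real.sqrt u / K ≤ Real.sqrt u / Real.sqrt 2 :=
              div_le_div_of_nonneg_left (Real.sqrt_nonneg u) (by positivity) hK2
            calc Real.sqrt u / K ≤ Real.sqrt u / Real.sqrt 2 := h5
              _ = (1/2 : ℝ) * (Real.sqrt 2 * Real.sqrt u) := by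
                  have hs2 : Real.sqrt 2 * Real.sqrt 2 = 2 := Real.mul_self_sqrt (by norm_num)
                  rw [div_eq_iff (by positivity : Real.sqrt 2 ≠ 0)]
                  linear_combination (-(Real.sqrt u)/2) * hs2
          calc Real.sqrt u / K ≤ (1/2 : ℝ) * Real.sqrt (2*u) := h4
            _ = Real.sqrt β * ((1/2 : ℝ) * Real.sqrt (2 * (u/β))) := h3.symm
            _ ≤ Real.sqrt β * S (u/β) := by
                exact mul_le_mul_of_nonneg_left h1 (Real.sqrt_nonneg β)
        · -- u/β < M, so u/M < β, √β ≥ √u/√M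
          push_neg at hM'
          have hβ' : u / M < β := by
            rw [div_lt_iff₀ hMpos]
            have := (div_lt_iff₀ hβ).1 hM'
            linarith [mul_comm M β]
          have h6 : Real.sqrt u / Real.sqrt M ≤ Real.sqrt β := by
            rw [← Real.sqrt_div hu0.le]
            exact Real.sqrt_le_sqrt hβ'.le
          have h7 : Real.sqrt M / c ≤ K := le_add_of_nonneg_left (by positivity)
          have h8 : Real.sqrt u / K ≤ Real.sqrt u / (Real.sqrt M / c) :=
            div_le_div_of_nonneg_left (Real.sqrt_nonneg u) (by positivity) h7
          have h9 : Real.sqrt u / (Real.sqrt M / c) = (Real.sqrt u / Real.sqrt M) * c := by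
            field_simp
          calc Real.sqrt u / K ≤ (Real.sqrt u / Real.sqrt M) * c := by rw [← h9]; exact h8
            _ ≤ Real.sqrt β * S (u/β) :=
                mul_le_mul h6 (hSlow _ huβ) hc.le (Real.sqrt_nonneg β)
      have hval_pos : 0 < Real.sqrt β * S (u/β) := by positivity
      rw [Real.norm_eq_abs, abs_of_nonneg (by positivity)]
      have hq : Real.exp (-u) / (Real.sqrt β * S (u/β)) ≤ Real.exp (-u) / (Real.sqrt u / K) :=
        div_le_div_of_nonneg_left (Real.exp_pos _).le (by positivity) hlow
      refine hq.trans (le_of_eq ?_)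
      rw [show ((1/2:ℝ)-1) = -(1/2:ℝ) by norm_num, Real.rpow_neg hu0.le, ← Real.sqrt_eq_rpow]
      rw [div_div_eq_mul_div]
      field_simp
    · simp only [F, Set.indicator_of_notMem hcase, norm_zero]
      exact hbnd_pos.le
  -- bound integrable
  have hbint : Integrable (fun u => K * (Real.exp (-u) * u ^ ((1/2:ℝ) - 1))) μ :=
    (Real.GammaIntegral_convergent one_half_pos).const_mul K
  -- pointwise limit
  have h_lim : ∀ᵐ u ∂μ, Tendsto (fun β => F β u) l
      (nhds (Real.exp (-u) / Real.sqrt (2*u))) := by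
    rw [hμ, ae_restrict_iff' measurableSet_Ioi]
    refine ae_of_all _ fun u hu => ?_
    have hu0 : (0:ℝ) < u := hu
    have h2u : (0:ℝ) < Real.sqrt (2*u) := Real.sqrt_pos.2 (by positivity)
    have hmem : ∀ᶠ β in l, β ∈ Set.Ioo (0:ℝ) (u / (E₀ + 1)) := by
      have : Set.Iio (u / (E₀+1)) ∈ nhds (0:ℝ) :=
        Iio_mem_nhds (by positivity)
      filter_upwards [hβpos, eventually_nhdsWithin_of_eventually_nhds
        (eventually_of_mem this (fun x hx => hx))] with β h1 h2
      exact ⟨h1, h2⟩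
    have htend : Tendsto (fun β : ℝ => u / β) l atTop := by
      simp only [div_eq_mul_inv]
      exact Tendsto.const_mul_atTop hu0 tendsto_inv_nhdsGT_zero
    have hratio : Tendsto (fun β : ℝ => S (u/β) / Real.sqrt (2 * (u/β))) l (nhds 1) :=
      hSasymp.comp htend
    have hden : Tendsto (fun β : ℝ => Real.sqrt β * S (u/β)) l (nhds (Real.sqrt (2*u))) := by
      have h1 : Tendsto (fun β : ℝ => Real.sqrt (2*u) * (S (u/β) / Real.sqrt (2 * (u/β)))) l
          (nhds (Real.sqrt (2*u) * 1)) := hratio.const_mul _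
      rw [mul_one] at h1
      refine h1.congr' ?_
      filter_upwards [hβpos] with β hβ
      have hsβ : (0:ℝ) < Real.sqrt β := Real.sqrt_pos.2 hβ
      have h2 : Real.sqrt (2 * (u/β)) = Real.sqrt (2*u) / Real.sqrt β := by
        rw [show 2 * (u/β) = (2*u)/β by ring, Real.sqrt_div (by positivity) β]
      rw [h2]
      field_simp
    have hfinal : Tendsto (fun β : ℝ => Real.exp (-u) / (Real.sqrt β * S (u/β))) l
        (nhds (Real.exp (-u) / Real.sqrt (2*u))) :=
      tendsto_const_nhds.div hden h2u.ne'
    apply hfinal.congr'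
    filter_upwards [hmem] with β hβ
    have hEu : E₀ * β < u := by
      have h1 : β * (E₀ + 1) < u := (lt_div_iff₀ (by positivity : (0:ℝ) < E₀ + 1)).1 hβ.2
      nlinarith [hβ.1]
    simp only [F, Set.indicator_of_mem (Set.mem_Ioi.2 hEu)]
  -- dominated convergence
  have hDCT : Tendsto (fun β => ∫ u, F β u ∂μ) l
      (nhds (∫ u in Set.Ioi (0:ℝ), Real.exp (-u) / Real.sqrt (2*u))) :=
    tendsto_integral_filter_of_dominated_convergence _ hmeas h_bound hbint h_lim
  -- value of the limit integral
  have hval : ∫ u in Set.Ioi (0:ℝ), Real.exp (-u) / Real.sqrt (2*u) = Real.sqrt (π/2) := by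
    have h : ∀ u ∈ Set.Ioi (0:ℝ), Real.exp (-u) / Real.sqrt (2*u)
        = (Real.sqrt 2)⁻¹ * (Real.exp (-u) * u ^ ((1/2:ℝ)-1)) := by
      intro u hu
      have hu0 : (0:ℝ) < u := hu
      rw [Real.sqrt_mul (by norm_num) u]
      rw [show ((1/2:ℝ)-1) = -(1/2:ℝ) by norm_num, Real.rpow_neg hu0.le,
        ← Real.sqrt_eq_rpow]
      field_simp
    rw [MeasureTheory.setIntegral_congr_fun measurableSet_Ioi h,
      MeasureTheory.integral_const_mul, ← Real.Gamma_eq_integral one_half_pos,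
      Real.Gamma_one_half_eq, Real.sqrt_div pi_pos.le 2]
    field_simp
  -- change-of-variables identity
  have heq : ∀ᶠ β in l, ∫ u, F β u ∂μ = Real.sqrt β * I β := by
    filter_upwards [hβpos] with β hβ
    have hsβ : (0:ℝ) < Real.sqrt β := Real.sqrt_pos.2 hβ
    have e1 : ∫ u, F β u ∂μ
        = ∫ u in Set.Ioi (E₀*β), Real.exp (-u) / (Real.sqrt β * S (u/β)) := by
      simp only [F]
      rw [MeasureTheory.integral_indicator measurableSet_Ioi, hrr β hβ]
    have e2 := integral_comp_mul_right_Ioi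
      (fun u => Real.exp (-u) / (Real.sqrt β * S (u/β))) E₀ hβ
    have e3 : ∀ x : ℝ, (fun u => Real.exp (-u) / (Real.sqrt β * S (u/β))) (x * β)
        = (Real.sqrt β)⁻¹ * (Real.exp (-β*x) / S x) := by
      intro x
      simp only
      rw [mul_div_cancel_right₀ x hβ.ne', show -(x*β) = -β*x by ring,
        div_mul_eq_div_div_swap, inv_mul_eq_div]
    calc ∫ u, F β u ∂μ
        = ∫ u in Set.Ioi (E₀*β), Real.exp (-u) / (Real.sqrt β * S (u/β)) := e1
      _ = β • ∫ x in Set.Ioi E₀,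
            (fun u => Real.exp (-u) / (Real.sqrt β * S (u/β))) (x * β) := by
          rw [e2, smul_smul, mul_inv_cancel₀ hβ.ne', one_smul]
      _ = β • ∫ x in Set.Ioi E₀, (Real.sqrt β)⁻¹ * (Real.exp (-β*x) / S x) := by
          simp only [e3]
      _ = β * ((Real.sqrt β)⁻¹ * ∫ x in Set.Ioi E₀, Real.exp (-β*x) / S x) := by
          rw [MeasureTheory.integral_const_mul, smul_eq_mul]
      _ = Real.sqrt β * I β := by
          rw [hI, ← mul_assoc]
          congr 1
          field_simp
          rw [Real.sq_sqrt hβ.le]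
  have h2' : Tendsto (fun β => Real.sqrt β * I β) l (nhds (Real.sqrt (π/2))) := by
    rw [hval] at hDCT
    exact hDCT.congr' heq
  have hsq : Real.sqrt (π/2) ≠ 0 := ne_of_gt (Real.sqrt_pos.2 (by positivity))
  have h1' : Tendsto (fun β => Real.sqrt β * Z β) l (nhds (Real.sqrt (π/2))) := by
    have h := hZ.const_mul (Real.sqrt (π/2))
    rw [mul_one] at h
    apply h.congr'
    filter_upwards [hβpos] with β hβ
    have hsβ : (0:ℝ) < Real.sqrt β := Real.sqrt_pos.2 hβ
    rw [show π/(2*β) = (π/2)/β by ring, Real.sqrt_div (by positivity) β]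
    field_simp
  have hmain : Tendsto (fun β => 2 * (Real.sqrt β * I β) / (Real.sqrt β * Z β)) l (nhds 2) := by
    have h := (h2'.const_mul 2).div h1' hsq
    rwa [mul_div_assoc, div_self hsq, mul_one] at h
  apply hmain.congr'
  filter_upwards [hβpos] with β hβ
  have hsβ : Real.sqrt β ≠ 0 := (Real.sqrt_pos.2 hβ).ne'
  by_cases hZ0 : Z β = 0
  · simp [hZ0]
  · rw [show (∫ z in Set.Ioi E₀, Real.exp (-β * z) / S z) = I β from rfl,
      show 2 * (Real.sqrt β * I β) = Real.sqrt β * (2 * I β) by ring,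
      mul_div_mul_left _ _ hsβ]
    field_simp
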